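/- Let n, m ≥ 1 and let γ = γ_{n,m} be the permutation of {1,…,n+m} with cycles (1,…,n)(n+1,…,n+m). The number of permutations π ∈ S_NC(n,m) such that both π and π⁻¹γ are fixed-point-free involutions equals n if n = m, and equals 0 if n ≠ m. -/

import Mathlib

open scoped Fin.NatCast Fin.CommRing

theorem Equiv.Perm.inv_apply_self {α : Type*} (f : Equiv.Perm α) (x : α) : f⁻¹ (f x) = x :=
  Equiv.symm_apply_apply f x

theorem Equiv.Perm.apply_inv_self {α : Type*} (f : Equiv.Perm α) (x : α) : f (f⁻¹ x) = x :=
  Equiv.apply_symm_apply f x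


noncomputable def cycleCount {N : ℕ} (π : Equiv.Perm (Fin N)) : ℕ :=
  Set.ncard {O : Set (Fin N) | ∃ x, O = {y | π.SameCycle x y}}

noncomputable def cyclesIn {N : ℕ} (π : Equiv.Perm (Fin N)) (C : Set (Fin N)) : ℕ :=
  Set.ncard {O : Set (Fin N) | (∃ x, O = {y | π.SameCycle x y}) ∧ O ⊆ C}

/-- The annular permutation `γ_{p,q}` of `{1,…,p+q}` (0-indexed as `Fin (p+q)`),
with the two cycles `(1,…,p)` and `(p+1,…,p+q)`. -/
def annularGamma (p q : ℕ) : Equiv.Perm (Fin (p + q)) :=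
  finSumFinEquiv.permCongr ((finRotate p).sumCongr (finRotate q))

/-- The interval involution `I_N = (1 2)(3 4)⋯(N-1 N)` of `{1,…,N}`
(0-indexed: swaps `2i ↔ 2i+1`), for `N` even. -/
def intervalInvolution (N : ℕ) : Equiv.Perm (Fin N) :=
  Function.Involutive.toPerm
    (fun x => ⟨if x.val % 2 = 0 then min (x.val + 1) (N - 1) else x.val - 1, by
      rcases x with ⟨v, hv⟩
      dsimp only
      split <;> omega⟩)
    (by
      intro x
      rcases x with ⟨v, hv⟩
      apply Fin.ext
      dsimp only
      split_ifs <;> omega)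

/-- The subgroup generated by `π` and `ρ` acts transitively on `Fin N`. -/
def JointTrans {N : ℕ} (π ρ : Equiv.Perm (Fin N)) : Prop :=
  ∀ x y : Fin N, ∃ g ∈ Subgroup.closure ({π, ρ} : Set (Equiv.Perm (Fin N))), g x = y

/-- `α` separates even numbers: no cycle of `α` contains two distinct even numbers
(an element `x : Fin N` represents the number `x.val + 1`). -/
def SeparatesEven {N : ℕ} (α : Equiv.Perm (Fin N)) : Prop :=
  ∀ x y : Fin N, α.SameCycle x y → (x.val + 1) % 2 = 0 → (y.val + 1) % 2 = 0 → x = y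

/-- `π ∈ S_NC(p,q)`: annular non-crossing permutations. -/
def AnnularNC (p q : ℕ) (π : Equiv.Perm (Fin (p + q))) : Prop :=
  JointTrans π (annularGamma p q) ∧
    cycleCount π + cycleCount (π⁻¹ * annularGamma p q) = p + q

/-- `A` witnesses bipartiteness of the graph `G_π`: `π(A) = A` and for each `i`,
exactly one of the (1-indexed) numbers `2i-1`, `2i` belongs to `A`. -/
def BipartSet {N : ℕ} (π : Equiv.Perm (Fin N)) (A : Set (Fin N)) : Prop :=
  (⇑π) '' A = A ∧ ∀ i : ℕ, ∀ h : 2 * i + 1 < N,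
    Xor' ((⟨2 * i, Nat.lt_of_succ_lt h⟩ : Fin N) ∈ A) ((⟨2 * i + 1, h⟩ : Fin N) ∈ A)

/-- The graph `G_π` is bipartite. -/
def GraphBipartite {N : ℕ} (π : Equiv.Perm (Fin N)) : Prop :=
  ∃ A : Set (Fin N), BipartSet π A

/-- `π ∈ J_{2n,2m}`: annular non-crossing, bipartite graph, and `π⁻¹γ` separates even. -/
def memJ (n m : ℕ) (π : Equiv.Perm (Fin (2 * n + 2 * m))) : Prop :=
  AnnularNC (2 * n) (2 * m) π ∧ GraphBipartite π ∧
    SeparatesEven (π⁻¹ * annularGamma (2 * n) (2 * m))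

lemma pairing_cycleCount {N : ℕ} (π : Equiv.Perm (Fin N))
    (h : ∀ x, π (π x) = x ∧ π x ≠ x) : 2 * cycleCount π = N := by
  classical
  have hinv : π * π = 1 := Equiv.ext fun x => (h x).1
  have hzpow : ∀ k : ℤ, π ^ k = 1 ∨ π ^ k = π := by
    intro k
    have h2 : π ^ (2:ℤ) = 1 := by
      rw [show (2:ℤ) = 1+1 by ring, zpow_add, zpow_one]; exact hinv
    have hk : π ^ k = π ^ (k % 2) := by
      conv_lhs => rw [← Int.mul_ediv_add_emod k 2]
      rw [zpow_add, zpow_mul, h2, one_zpow, one_mul]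
    rcases Int.emod_two_eq k with h0 | h1
    · left; rw [hk, h0, zpow_zero]
    · right; rw [hk, h1, zpow_one]
  have horb : ∀ x : Fin N, {y | π.SameCycle x y} = ({x, π x} : Set (Fin N)) := by
    intro x
    ext y
    constructor
    · rintro ⟨k, rfl⟩
      rcases hzpow k with hk | hk <;> rw [hk] <;> simp
    · rintro (rfl | rfl)
      · exact ⟨0, by simp⟩
      · exact ⟨1, by simp⟩
  set F : Fin N → Set (Fin N) := fun x => ({x, π x} : Set (Fin N)) with hF
  have hset : {O : Set (Fin N) | ∃ x, O = {y | π.SameCycle x y}} = Set.range F := by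
    ext O; simp only [Set.mem_setOf_eq, Set.mem_range]
    constructor
    · rintro ⟨x, rfl⟩; exact ⟨x, (horb x).symm⟩
    · rintro ⟨x, rfl⟩; exact ⟨x, (horb x).symm⟩
  have hco : Set.range F = ↑(Finset.univ.image F) := by simp
  rw [cycleCount, hset, hco, Set.ncard_coe_finset]
  have key : (Finset.univ : Finset (Fin N)).card
      = ∑ b ∈ Finset.univ.image F, (Finset.univ.filter (fun x => F x = b)).card :=
    Finset.card_eq_sum_card_fiberwise (by intro x _; simp)
  have fib : ∀ b ∈ Finset.univ.image F, (Finset.univ.filter (fun x => F x = b)).card = 2 := by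
    intro b hb
    rcases Finset.mem_image.mp hb with ⟨x0, -, rfl⟩
    have : Finset.univ.filter (fun x => F x = F x0) = ({x0, π x0} : Finset (Fin N)) := by
      ext x
      simp only [Finset.mem_filter, Finset.mem_univ, true_and, Finset.mem_insert,
        Finset.mem_singleton]
      constructor
      · intro hx
        have : x ∈ F x0 := by rw [← hx]; exact Set.mem_insert _ _
        simpa [hF] using this
      · rintro (rfl | rfl)
        · rfl
        · simp only [hF]
          rw [(h x0).1, Set.pair_comm]
    rw [this, Finset.card_insert_of_notMem (by simpa using fun hx => (h x0).2 hx.symm),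
      Finset.card_singleton]
  rw [Finset.sum_congr rfl fib, Finset.sum_const, smul_eq_mul] at key
  have : (Finset.univ : Finset (Fin N)).card = N := Finset.card_fin N
  omega

section core
variable {k l : ℕ}

local notation "e" => (finSumFinEquiv : Fin (k+1) ⊕ Fin (l+1) ≃ Fin ((k+1)+(l+1)))
local notation "γ" => annularGamma (k+1) (l+1)

lemma gamma_inl (i : Fin (k+1)) : γ (e (Sum.inl i)) = e (Sum.inl (i+1)) := by
  simp [annularGamma, finRotate_succ_apply]

lemma gamma_inr (j : Fin (l+1)) : γ (e (Sum.inr j)) = e (Sum.inr (j+1)) := by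
  simp [annularGamma, finRotate_succ_apply]

lemma gamma_inv_inl (i : Fin (k+1)) : (γ)⁻¹ (e (Sum.inl i)) = e (Sum.inl (i-1)) := by
  have := gamma_inl (k := k) (l := l) (i - 1)
  rw [sub_add_cancel] at this
  rw [← this, Equiv.Perm.inv_apply_self]

lemma gamma_inv_inr (j : Fin (l+1)) : (γ)⁻¹ (e (Sum.inr j)) = e (Sum.inr (j-1)) := by
  have := gamma_inr (k := k) (l := l) (j - 1)
  rw [sub_add_cancel] at this
  rw [← this, Equiv.Perm.inv_apply_self]

lemma gamma_pow_inl (t : ℕ) (i : Fin (k+1)) :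
    ((γ) ^ t) (e (Sum.inl i)) = e (Sum.inl (i + t)) := by
  induction t with
  | zero => simp
  | succ t ih =>
    rw [pow_succ', Equiv.Perm.mul_apply, ih, gamma_inl]
    have : (i + (t : Fin (k+1)) + 1) = i + ((t : ℕ) + 1 : ℕ) := by push_cast; ring
    rw [this]

lemma gamma_pow_inr (t : ℕ) (j : Fin (l+1)) :
    ((γ) ^ t) (e (Sum.inr j)) = e (Sum.inr (j + t)) := by
  induction t with
  | zero => simp
  | succ t ih =>
    rw [pow_succ', Equiv.Perm.mul_apply, ih, gamma_inr]
    have : (j + (t : Fin (l+1)) + 1) = j + ((t : ℕ) + 1 : ℕ) := by push_cast; ring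
    rw [this]

lemma key_pt (π : Equiv.Perm (Fin ((k+1)+(l+1)))) (hcomm : π * γ = (γ)⁻¹ * π) (x) :
    π ((γ) x) = (γ)⁻¹ (π x) := by
  have := congrArg (fun σ : Equiv.Perm (Fin ((k+1)+(l+1))) => σ x) hcomm
  simpa using this

/-- If some left point maps to a left point, all left points map to left points. -/
lemma all_left (π : Equiv.Perm (Fin ((k+1)+(l+1)))) (hcomm : π * γ = (γ)⁻¹ * π)
    (i0 : Fin (k+1)) (j0 : Fin (k+1)) (h0 : π (e (Sum.inl i0)) = e (Sum.inl j0)) :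
    ∀ i : Fin (k+1), ∃ j, π (e (Sum.inl i)) = e (Sum.inl j) := by
  have step : ∀ t : ℕ, π (e (Sum.inl (i0 + t))) = e (Sum.inl (j0 - t)) := by
    intro t
    induction t with
    | zero => simpa using h0
    | succ t ih =>
      push_cast
      have h1 : (i0 + ((t : Fin (k+1)) + 1)) = (i0 + (t : Fin (k+1))) + 1 := by ring
      have h2 : (j0 - ((t : Fin (k+1)) + 1)) = (j0 - (t : Fin (k+1))) - 1 := by ring
      rw [h1, h2, ← gamma_inl, key_pt π hcomm, ih, gamma_inv_inl]
  intro i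
  refine ⟨j0 - (i - i0), ?_⟩
  have := step (i - i0).val
  rwa [Fin.cast_val_eq_self, add_sub_cancel] at this

lemma all_right (π : Equiv.Perm (Fin ((k+1)+(l+1)))) (hcomm : π * γ = (γ)⁻¹ * π)
    (j0 : Fin (l+1)) (i0 : Fin (l+1)) (h0 : π (e (Sum.inr j0)) = e (Sum.inr i0)) :
    ∀ j : Fin (l+1), ∃ i, π (e (Sum.inr j)) = e (Sum.inr i) := by
  have step : ∀ t : ℕ, π (e (Sum.inr (j0 + t))) = e (Sum.inr (i0 - t)) := by
    intro t
    induction t with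
    | zero => simpa using h0
    | succ t ih =>
      push_cast
      have h1 : (j0 + ((t : Fin (l+1)) + 1)) = (j0 + (t : Fin (l+1))) + 1 := by ring
      have h2 : (i0 - ((t : Fin (l+1)) + 1)) = (i0 - (t : Fin (l+1))) - 1 := by ring
      rw [h1, h2, ← gamma_inr, key_pt π hcomm, ih, gamma_inv_inr]
  intro j
  refine ⟨i0 - (j - j0), ?_⟩
  have := step (j - j0).val
  rwa [Fin.cast_val_eq_self, add_sub_cancel] at this

lemma cross (π : Equiv.Perm (Fin ((k+1)+(l+1)))) (htrans : JointTrans π γ)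
    (hcomm : π * γ = (γ)⁻¹ * π) (hinv : π * π = 1) :
    (∀ i : Fin (k+1), ∃ j : Fin (l+1), π (e (Sum.inl i)) = e (Sum.inr j)) ∧
    (∀ j : Fin (l+1), ∃ i : Fin (k+1), π (e (Sum.inr j)) = e (Sum.inl i)) := by
  have pi_pi : ∀ x, π (π x) = x := by
    intro x
    have := congrArg (fun σ : Equiv.Perm (Fin ((k+1)+(l+1))) => σ x) hinv
    simpa using this
  have inv_trans : ∀ (L : Set (Fin ((k+1)+(l+1)))),
      (∀ x, x ∈ L ↔ π x ∈ L) → (∀ x, x ∈ L ↔ γ x ∈ L) →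
      ∀ g ∈ Subgroup.closure ({π, γ} : Set (Equiv.Perm (Fin ((k+1)+(l+1))))),
      ∀ x, x ∈ L ↔ g x ∈ L := by
    intro L hLπ hLγ g hg
    induction hg using Subgroup.closure_induction with
    | mem a ha =>
      rcases ha with rfl | ha
      · exact hLπ
      · rcases ha with rfl
        exact hLγ
    | one => simp
    | mul a b _ _ pa pb =>
      intro x
      rw [Equiv.Perm.mul_apply]
      exact (pb x).trans (pa (b x))
    | inv a _ pa =>
      intro x
      have := (pa (a⁻¹ x)).symm
      rwa [Equiv.Perm.apply_inv_self] at this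
  have no_left : ¬ ∃ (i0 j0 : Fin (k+1)), π (e (Sum.inl i0)) = e (Sum.inl j0) := by
    rintro ⟨i0, j0, h0⟩
    have hall := all_left π hcomm i0 j0 h0
    set L : Set (Fin ((k+1)+(l+1))) := {x | ∃ i, x = e (Sum.inl i)} with hL
    have hLπ : ∀ x, x ∈ L ↔ π x ∈ L := by
      intro x
      constructor
      · rintro ⟨i, rfl⟩
        obtain ⟨j, hj⟩ := hall i
        exact ⟨j, hj⟩
      · rintro ⟨i, hi⟩
        obtain ⟨j, hj⟩ := hall i
        refine ⟨j, ?_⟩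
        rw [← pi_pi x, hi, hj]
    have hLγ : ∀ x, x ∈ L ↔ γ x ∈ L := by
      intro x
      constructor
      · rintro ⟨i, rfl⟩
        exact ⟨i + 1, gamma_inl i⟩
      · rintro ⟨i, hi⟩
        refine ⟨i - 1, ?_⟩
        have : x = (γ)⁻¹ ((γ) x) := (Equiv.Perm.inv_apply_self _ _).symm
        rw [this, hi, gamma_inv_inl]
    obtain ⟨g, hgmem, hgx⟩ := htrans (e (Sum.inl (0 : Fin (k+1)))) (e (Sum.inr (0 : Fin (l+1))))
    have h1 : e (Sum.inl (0 : Fin (k+1))) ∈ L := ⟨0, rfl⟩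
    have h2 : e (Sum.inr (0 : Fin (l+1))) ∈ L := by
      rw [← hgx]
      exact (inv_trans L hLπ hLγ g hgmem _).mp h1
    obtain ⟨i, hi⟩ := h2
    exact absurd (finSumFinEquiv.injective hi) (by simp)
  have no_right : ¬ ∃ (j0 i0 : Fin (l+1)), π (e (Sum.inr j0)) = e (Sum.inr i0) := by
    rintro ⟨j0, i0, h0⟩
    have hall := all_right π hcomm j0 i0 h0
    set R : Set (Fin ((k+1)+(l+1))) := {x | ∃ j, x = e (Sum.inr j)} with hR
    have hRπ : ∀ x, x ∈ R ↔ π x ∈ R := by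
      intro x
      constructor
      · rintro ⟨j, rfl⟩
        obtain ⟨i, hi⟩ := hall j
        exact ⟨i, hi⟩
      · rintro ⟨j, hj⟩
        obtain ⟨i, hi⟩ := hall j
        refine ⟨i, ?_⟩
        rw [← pi_pi x, hj, hi]
    have hRγ : ∀ x, x ∈ R ↔ γ x ∈ R := by
      intro x
      constructor
      · rintro ⟨j, rfl⟩
        exact ⟨j + 1, gamma_inr j⟩
      · rintro ⟨j, hj⟩
        refine ⟨j - 1, ?_⟩
        have : x = (γ)⁻¹ ((γ) x) := (Equiv.Perm.inv_apply_self _ _).symm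
        rw [this, hj, gamma_inv_inr]
    obtain ⟨g, hgmem, hgx⟩ := htrans (e (Sum.inr (0 : Fin (l+1)))) (e (Sum.inl (0 : Fin (k+1))))
    have h1 : e (Sum.inr (0 : Fin (l+1))) ∈ R := ⟨0, rfl⟩
    have h2 : e (Sum.inl (0 : Fin (k+1))) ∈ R := by
      rw [← hgx]
      exact (inv_trans R hRπ hRγ g hgmem _).mp h1
    obtain ⟨j, hj⟩ := h2
    exact absurd (finSumFinEquiv.injective hj) (by simp)
  constructor
  · intro i
    rcases h : finSumFinEquiv.symm (π (e (Sum.inl i))) with j | j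
    · exfalso
      apply no_left
      exact ⟨i, j, by rw [← finSumFinEquiv.apply_symm_apply (π (e (Sum.inl i))), h]⟩
    · exact ⟨j, by rw [← finSumFinEquiv.apply_symm_apply (π (e (Sum.inl i))), h]⟩
  · intro j
    rcases h : finSumFinEquiv.symm (π (e (Sum.inr j))) with i | i
    · exact ⟨i, by rw [← finSumFinEquiv.apply_symm_apply (π (e (Sum.inr j))), h]⟩
    · exfalso
      apply no_right
      exact ⟨j, i, by rw [← finSumFinEquiv.apply_symm_apply (π (e (Sum.inr j))), h]⟩

lemma cross_card_eq (π : Equiv.Perm (Fin ((k+1)+(l+1)))) (htrans : JointTrans π γ)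
    (hcomm : π * γ = (γ)⁻¹ * π) (hinv : π * π = 1) : k = l := by
  obtain ⟨h1, h2⟩ := cross π htrans hcomm hinv
  have pi_pi : ∀ x, π (π x) = x := by
    intro x
    have := congrArg (fun σ : Equiv.Perm (Fin ((k+1)+(l+1))) => σ x) hinv
    simpa using this
  choose f hf using h1
  choose g hg using h2
  have hgf : ∀ i, g (f i) = i := by
    intro i
    have h : π (e (Sum.inr (f i))) = e (Sum.inl i) := by rw [← hf, pi_pi]
    have := (hg (f i)).symm.trans h
    exact Sum.inl.inj (finSumFinEquiv.injective this)
  have hfg : ∀ j, f (g j) = j := by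
    intro j
    have h : π (e (Sum.inl (g j))) = e (Sum.inr j) := by rw [← hg, pi_pi]
    have := (hf (g j)).symm.trans h
    exact Sum.inr.inj (finSumFinEquiv.injective this)
  have : Nonempty (Fin (k+1) ≃ Fin (l+1)) := ⟨⟨f, g, hgf, hfg⟩⟩
  have := Fin.equiv_iff_eq.mp this
  omega

/-- Derive the perm equations from the pointwise pairing conditions. -/
lemma derive_eqs (π : Equiv.Perm (Fin ((k+1)+(l+1))))
    (hp1 : ∀ x, π (π x) = x) (hp2 : ∀ x, (π⁻¹ * γ) ((π⁻¹ * γ) x) = x) :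
    π * π = 1 ∧ π * γ = (γ)⁻¹ * π := by
  have hinv : π * π = 1 := Equiv.ext fun x => by simpa using hp1 x
  have hσ2 : (π⁻¹ * γ) * (π⁻¹ * γ) = 1 := Equiv.ext fun x => by simpa using hp2 x
  have hπinv : π⁻¹ = π := inv_eq_of_mul_eq_one_right hinv
  refine ⟨hinv, ?_⟩
  have h3 := inv_eq_of_mul_eq_one_right hσ2
  rw [mul_inv_rev, inv_inv, hπinv] at h3
  exact h3.symm

end core

/-- The sum-level spoke involution. -/
def subPerm (k : ℕ) (c : Fin (k+1)) : Equiv.Perm (Fin (k+1) ⊕ Fin (k+1)) :=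
  Function.Involutive.toPerm
    (Sum.elim (fun i => Sum.inr (c - i)) (fun j => Sum.inl (c - j)))
    (by rintro (i | j) <;> simp [sub_sub_cancel])

/-- The spoke permutation of the `(k+1, k+1)` annulus determined by `π 0 = c`. -/
def spoke (k : ℕ) (c : Fin (k+1)) : Equiv.Perm (Fin ((k+1)+(k+1))) :=
  finSumFinEquiv.permCongr (subPerm k c)

section spoke
variable {k : ℕ}

local notation "e" => (finSumFinEquiv : Fin (k+1) ⊕ Fin (k+1) ≃ Fin ((k+1)+(k+1)))
local notation "γ" => annularGamma (k+1) (k+1)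

lemma sp_inl (c i : Fin (k+1)) : spoke k c (e (Sum.inl i)) = e (Sum.inr (c - i)) := by
  simp only [spoke, Equiv.permCongr_apply, Equiv.symm_apply_apply, subPerm,
    Function.Involutive.coe_toPerm, Sum.elim_inl]
  rfl

lemma sp_inr (c j : Fin (k+1)) : spoke k c (e (Sum.inr j)) = e (Sum.inl (c - j)) := by
  simp only [spoke, Equiv.permCongr_apply, Equiv.symm_apply_apply, subPerm,
    Function.Involutive.coe_toPerm, Sum.elim_inr]
  rfl

lemma spoke_pair (c : Fin (k+1)) : ∀ x, spoke k c (spoke k c x) = x ∧ spoke k c x ≠ x := by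
  intro x
  obtain ⟨y, rfl⟩ : ∃ y, x = e y := ⟨_, (finSumFinEquiv.apply_symm_apply x).symm⟩
  rcases y with i | j
  · constructor
    · rw [sp_inl, sp_inr, sub_sub_cancel]
    · rw [sp_inl]
      intro h
      exact absurd (finSumFinEquiv.injective h) (by simp)
  · constructor
    · rw [sp_inr, sp_inl, sub_sub_cancel]
    · rw [sp_inr]
      intro h
      exact absurd (finSumFinEquiv.injective h) (by simp)

lemma spoke_inv (c : Fin (k+1)) : (spoke k c)⁻¹ = spoke k c :=
  inv_eq_of_mul_eq_one_right (Equiv.ext fun x => by simpa using (spoke_pair c x).1)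

lemma spoke_sigma_inl (c i : Fin (k+1)) :
    ((spoke k c)⁻¹ * γ) (e (Sum.inl i)) = e (Sum.inr (c - (i+1))) := by
  rw [Equiv.Perm.mul_apply, spoke_inv, gamma_inl, sp_inl]

lemma spoke_sigma_inr (c j : Fin (k+1)) :
    ((spoke k c)⁻¹ * γ) (e (Sum.inr j)) = e (Sum.inl (c - (j+1))) := by
  rw [Equiv.Perm.mul_apply, spoke_inv, gamma_inr, sp_inr]

lemma spoke_sigma_pair (c : Fin (k+1)) :
    ∀ x, ((spoke k c)⁻¹ * γ) (((spoke k c)⁻¹ * γ) x) = x ∧ ((spoke k c)⁻¹ * γ) x ≠ x := by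
  intro x
  obtain ⟨y, rfl⟩ : ∃ y, x = e y := ⟨_, (finSumFinEquiv.apply_symm_apply x).symm⟩
  rcases y with i | j
  · constructor
    · rw [spoke_sigma_inl, spoke_sigma_inr]
      have : c - (c - (i+1) + 1) = i := by ring
      rw [this]
    · rw [spoke_sigma_inl]
      intro h
      exact absurd (finSumFinEquiv.injective h) (by simp)
  · constructor
    · rw [spoke_sigma_inr, spoke_sigma_inl]
      have : c - (c - (j+1) + 1) = j := by ring
      rw [this]
    · rw [spoke_sigma_inr]
      intro h
      exact absurd (finSumFinEquiv.injective h) (by simp)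

lemma spoke_trans (c : Fin (k+1)) : JointTrans (spoke k c) γ := by
  have hπc : spoke k c ∈ Subgroup.closure ({spoke k c, γ} : Set (Equiv.Perm _)) :=
    Subgroup.subset_closure (Set.mem_insert _ _)
  have hγc : (γ) ∈ Subgroup.closure ({spoke k c, γ} : Set (Equiv.Perm _)) :=
    Subgroup.subset_closure (Set.mem_insert_of_mem _ rfl)
  have orbit : ∀ y, ∃ g ∈ Subgroup.closure ({spoke k c, γ} : Set (Equiv.Perm _)),
      g (e (Sum.inl (0 : Fin (k+1)))) = y := by
    intro y
    obtain ⟨z, rfl⟩ : ∃ z, y = e z := ⟨_, (finSumFinEquiv.apply_symm_apply y).symm⟩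
    rcases z with j | j
    · refine ⟨(γ) ^ (j.val), pow_mem hγc _, ?_⟩
      rw [gamma_pow_inl, zero_add, Fin.cast_val_eq_self]
    · refine ⟨(γ) ^ ((j - c).val) * spoke k c, mul_mem (pow_mem hγc _) hπc, ?_⟩
      rw [Equiv.Perm.mul_apply, sp_inl, gamma_pow_inr, Fin.cast_val_eq_self]
      have : c - 0 + (j - c) = j := by ring
      rw [this]
  intro x y
  obtain ⟨gx, hgx, hx⟩ := orbit x
  obtain ⟨gy, hgy, hy⟩ := orbit y
  refine ⟨gy * gx⁻¹, mul_mem hgy (inv_mem hgx), ?_⟩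
  rw [Equiv.Perm.mul_apply, ← hx, Equiv.Perm.inv_apply_self, hy]

lemma spoke_injective : Function.Injective (spoke k) := by
  intro a b h
  have := congrArg (fun σ : Equiv.Perm (Fin ((k+1)+(k+1))) =>
    σ (e (Sum.inl (0 : Fin (k+1))))) h
  simp only [sp_inl, sub_zero] at this
  exact Sum.inr.inj (finSumFinEquiv.injective this)

lemma spoke_annularNC (c : Fin (k+1)) : AnnularNC (k+1) (k+1) (spoke k c) := by
  refine ⟨spoke_trans c, ?_⟩
  have h1 := pairing_cycleCount (spoke k c) (spoke_pair c)
  have h2 := pairing_cycleCount ((spoke k c)⁻¹ * γ) (spoke_sigma_pair c)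
  omega

end spoke

theorem stmt_14 (n m : ℕ) (hn : 1 ≤ n) (hm : 1 ≤ m) :
    Set.ncard {π : Equiv.Perm (Fin (n + m)) |
        AnnularNC n m π ∧ (∀ x, π (π x) = x ∧ π x ≠ x) ∧
        (∀ x, (π⁻¹ * annularGamma n m) ((π⁻¹ * annularGamma n m) x) = x ∧
          (π⁻¹ * annularGamma n m) x ≠ x)} =
      if n = m then n else 0 := by
  obtain ⟨k, rfl⟩ : ∃ k, n = k + 1 := ⟨n - 1, by omega⟩
  obtain ⟨l, rfl⟩ : ∃ l, m = l + 1 := ⟨m - 1, by omega⟩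
  by_cases hkl : k = l
  · subst hkl
    rw [if_pos rfl]
    have hset : {π : Equiv.Perm (Fin ((k+1) + (k+1))) |
        AnnularNC (k+1) (k+1) π ∧ (∀ x, π (π x) = x ∧ π x ≠ x) ∧
        (∀ x, (π⁻¹ * annularGamma (k+1) (k+1)) ((π⁻¹ * annularGamma (k+1) (k+1)) x) = x ∧
          (π⁻¹ * annularGamma (k+1) (k+1)) x ≠ x)} = Set.range (spoke k) := by
      ext π
      simp only [Set.mem_setOf_eq, Set.mem_range]
      constructor
      · rintro ⟨⟨htrans, -⟩, hp1, hp2⟩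
        obtain ⟨hinv, hcomm⟩ := derive_eqs π (fun x => (hp1 x).1) (fun x => (hp2 x).1)
        obtain ⟨h1, -⟩ := cross π htrans hcomm hinv
        have pi_pi : ∀ x, π (π x) = x := fun x => (hp1 x).1
        choose f hf using h1
        have hstep : ∀ i, f (i + 1) = f i - 1 := by
          intro i
          have hk2 := key_pt π hcomm (finSumFinEquiv (Sum.inl i))
          rw [gamma_inl, hf, hf, gamma_inv_inr] at hk2
          exact Sum.inr.inj (finSumFinEquiv.injective hk2)
        set c := f 0 with hc
        have hfn : ∀ t : ℕ, f ((t : Fin (k+1))) = c - t := by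
          intro t
          induction t with
          | zero => simp [hc]
          | succ t ih =>
            push_cast
            rw [hstep, ih]
            ring
        have hfi : ∀ i, f i = c - i := by
          intro i
          have := hfn i.val
          rwa [Fin.cast_val_eq_self] at this
        have hinr : ∀ j, π (finSumFinEquiv (Sum.inr j)) = finSumFinEquiv (Sum.inl (c - j)) := by
          intro j
          have h := hf (c - j)
          rw [hfi, sub_sub_cancel] at h
          rw [← h, pi_pi]
        refine ⟨c, ?_⟩
        apply Equiv.ext
        intro x
        obtain ⟨y, rfl⟩ : ∃ y, x = finSumFinEquiv y :=
          ⟨_, (finSumFinEquiv.apply_symm_apply x).symm⟩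
        rcases y with i | j
        · rw [sp_inl, hf, hfi]
        · rw [sp_inr, hinr]
      · rintro ⟨c, rfl⟩
        exact ⟨spoke_annularNC c, spoke_pair c, spoke_sigma_pair c⟩
    rw [hset, ← Set.image_univ, Set.ncard_image_of_injective _ spoke_injective,
      Set.ncard_univ]
    simp
  · rw [if_neg (by omega)]
    have hset : {π : Equiv.Perm (Fin ((k+1) + (l+1))) |
        AnnularNC (k+1) (l+1) π ∧ (∀ x, π (π x) = x ∧ π x ≠ x) ∧
        (∀ x, (π⁻¹ * annularGamma (k+1) (l+1)) ((π⁻¹ * annularGamma (k+1) (l+1)) x) = x ∧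
          (π⁻¹ * annularGamma (k+1) (l+1)) x ≠ x)} = ∅ := by
      ext π
      simp only [Set.mem_setOf_eq, Set.mem_empty_iff_false, iff_false, not_and]
      rintro ⟨htrans, -⟩ hp1 hp2
      obtain ⟨hinv, hcomm⟩ := derive_eqs π (fun x => (hp1 x).1) (fun x => (hp2 x).1)
      exact absurd (cross_card_eq π htrans hcomm hinv) hkl
    rw [hset, Set.ncard_empty]
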